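/- Let T be a tree with at least two vertices, and let ∂_f : ∂_f T → T and ∂_g : ∂_g T → T be two distinct elementary face maps such that the pair {∂_f, ∂_g} is not mixed (a mixed pair consists of an outer vertex v and the unique inner edge e attached to v). Then ∂_f ∂_g T and ∂_g ∂_f T exist and are equal, i.e., the edge/vertex g can still be removed from ∂_f T and vice versa, and removing f then g yields the same tree as removing g then f. -/

import Mathlib

/-- A "pre-tree": a candidate subtree (face) of an ambient tree `T`, given by its
set of edges and the set of outputs of its vertices. -/
structure PreTree (T : Type) where
  edges : Set T
  vert : Set T

variable {T : Type} [PartialOrder T]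

/-- `x` is an input of the vertex of `Q` with output `o`. -/
def InputOf (Q : PreTree T) (x o : T) : Prop :=
  x ∈ Q.edges ∧ o < x ∧ ¬∃ y ∈ Q.edges, o < y ∧ y < x

/-- The set of inputs of the vertex of `Q` with output `o`. -/
def Inps (Q : PreTree T) (o : T) : Set T := {x | InputOf Q x o}

/-- `x` is a leaf of `Q`: an edge carrying no vertex. -/
def IsLeafOf (Q : PreTree T) (x : T) : Prop := x ∈ Q.edges ∧ x ∉ Q.vert

/-- `r` is the root edge of `Q`. -/
def RootOf (Q : PreTree T) (r : T) : Prop := r ∈ Q.edges ∧ ∀ x ∈ Q.edges, r ≤ x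

/-- `e` is an inner edge of `Q`: it carries a vertex and is an input of a vertex. -/
def InnerE (Q : PreTree T) (e : T) : Prop := e ∈ Q.vert ∧ ∃ o ∈ Q.vert, InputOf Q e o

/-- `(X; t)` is an operation of the (pre-)tree `Q`: every leaf of `Q` above `t` is
above exactly one element of `X` and every stump of `Q` above `t` is above at most
one element of `X`. -/
def IsOpIn (Q : PreTree T) (X : Set T) (t : T) : Prop :=
  X ⊆ Q.edges ∧ t ∈ Q.edges ∧ (∀ x ∈ X, t < x) ∧
  (∀ l, IsLeafOf Q l → t ≤ l → ∃! x, x ∈ X ∧ x ≤ l) ∧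
  (∀ o ∈ Q.vert, Inps Q o = ∅ → t ≤ o →
    ∀ x₁ ∈ X, ∀ x₂ ∈ X, x₁ ≤ o → x₂ ≤ o → x₁ = x₂)

/-- `P` is a subtree (face) of `Q`: edges and vertices of `P` are among those of
`Q`, and each vertex of `P` is an operation of `Q`. -/
def SubtreeRel (P Q : PreTree T) : Prop :=
  P.edges ⊆ Q.edges ∧ P.vert ⊆ Q.vert ∧ ∀ o ∈ P.vert, IsOpIn Q (Inps P o) o

/-- The ambient tree `T` with leaf set `L`, viewed as a pre-tree. -/
def fullTree (L : Set T) : PreTree T := ⟨Set.univ, {e | e ∉ L}⟩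

/-- `P` is a face of the ambient tree `T` with leaf set `L`. -/
def IsFace (L : Set T) (P : PreTree T) : Prop :=
  P.edges.Nonempty ∧ (∃ r, RootOf P r) ∧
  P.vert ⊆ P.edges ∧ (∀ e ∈ P.vert, e ∉ L) ∧
  (∀ e ∈ P.edges, (∃ x ∈ P.edges, e < x) → e ∈ P.vert) ∧
  SubtreeRel P (fullTree L)

/-- Number of vertices of a pre-tree. -/
noncomputable def nv (P : PreTree T) : ℕ := P.vert.ncard

/-- Labels for elementary face maps: inner faces, top faces (a top vertex `w` with
output `o`), and bottom faces (the bottom vertex `v` with output the root `r`,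
keeping the subtree above the input `e`). -/
inductive FLbl (T : Type) where
  | inner (e : T)
  | top (w : Set T) (o : T)
  | bot (v : Set T) (r : T) (e : T)

/-- `ElemF f P Q` : `P` is obtained from `Q` by the elementary face map labelled
`f`, i.e. there is an elementary face map `∂_f : P → Q`. -/
def ElemF (f : FLbl T) (P Q : PreTree T) : Prop :=
  match f with
  | .inner e => InnerE Q e ∧ P.edges = Q.edges \ {e} ∧ P.vert = Q.vert \ {e}
  | .top w o => o ∈ Q.vert ∧ w = Inps Q o ∧ (∀ x ∈ w, x ∉ Q.vert) ∧
      P.edges = Q.edges \ w ∧ P.vert = Q.vert \ {o}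
  | .bot v r e => RootOf Q r ∧ r ∈ Q.vert ∧ v = Inps Q r ∧ e ∈ v ∧
      (∀ x ∈ v, x ≠ e → x ∉ Q.vert) ∧
      P.edges = {x ∈ Q.edges | e ≤ x} ∧ P.vert = Q.vert \ {r}

/-- `x` is attached to the vertex of `Q` with output `o`. -/
def AttachedTo (Q : PreTree T) (x o : T) : Prop := x = o ∨ InputOf Q x o

/-- `f` is the label of an outer (top or bottom) vertex of `Q` with output `o`. -/
def OuterLbl (Q : PreTree T) (f : FLbl T) (o : T) : Prop :=
  f = FLbl.top (Inps Q o) o ∨ (∃ e, f = FLbl.bot (Inps Q o) o e ∧ RootOf Q o)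

/-- `f` is an outer vertex face label and `g` the inner face label of the unique
inner edge of `Q` attached to that vertex. -/
def MixedOrd (f g : FLbl T) (Q : PreTree T) : Prop :=
  ∃ e o, g = FLbl.inner e ∧ InnerE Q e ∧ OuterLbl Q f o ∧ AttachedTo Q e o ∧
    (∀ e', InnerE Q e' → AttachedTo Q e' o → e' = e)

/-- `{∂_f, ∂_g}` is a mixed pair of elementary face maps of `Q`. -/
def MixedPair (f g : FLbl T) (Q : PreTree T) : Prop := MixedOrd f g Q ∨ MixedOrd g f Q


section Helpers

set_option linter.unusedSectionVars false

variable {T : Type} [Fintype T] [PartialOrder T] {L : Set T}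

lemma input_full_iff {x o : T} :
    InputOf (fullTree L) x o ↔ o < x ∧ ∀ y, o < y → ¬ y < x := by
  simp only [InputOf, fullTree, Set.mem_univ, true_and]
  constructor
  · rintro ⟨h1, h2⟩
    exact ⟨h1, fun y hy hlt => h2 ⟨y, hy, hlt⟩⟩
  · rintro ⟨h1, h2⟩
    exact ⟨h1, by rintro ⟨y, hy, hlt⟩; exact h2 y hy hlt⟩

lemma mem_full_vert {x : T} : x ∈ (fullTree L).vert ↔ x ∉ L := Iff.rfl

lemma exists_min_input {o y : T} (h : o < y) : ∃ z, z ≤ y ∧ InputOf (fullTree L) z o := by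
  classical
  obtain ⟨z, hz, hzmin⟩ := Finset.exists_minimal
    (s := Finset.univ.filter (fun z => o < z ∧ z ≤ y)) ⟨y, by simp [h]⟩
  simp only [Finset.mem_filter, Finset.mem_univ, true_and] at hz
  refine ⟨z, hz.2, input_full_iff.mpr ⟨hz.1, fun u hu hlt => ?_⟩⟩
  exact hlt.not_ge (hzmin (by simp [hu, hlt.le.trans hz.2]) hlt.le)


lemma top_w_eq (hL : ∀ l ∈ L, IsMax l) {w : Set T} {o : T}
    (hw : w = Inps (fullTree L) o) (hwL : ∀ x ∈ w, x ∈ L) :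
    w = {y | o < y} := by
  ext y
  simp only [Set.mem_setOf_eq]
  constructor
  · intro hy
    rw [hw] at hy
    exact (input_full_iff.mp hy).1
  · intro hy
    obtain ⟨z, hzy, hz⟩ := exists_min_input (L := L) hy
    have hzw : z ∈ w := by rw [hw]; exact hz
    have hyz : y ≤ z := (hL z (hwL z hzw)) hzy
    have : z = y := le_antisymm hzy hyz
    exact this ▸ hzw

lemma inps_top_eq (hL : ∀ l ∈ L, IsMax l) {w : Set T} {o : T}
    (hwe : w = {y | o < y}) (hwL : ∀ x ∈ w, x ∈ L)
    (Q : PreTree T) (hsub : w ⊆ Q.edges) : Inps Q o = w := by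
  ext x
  simp only [Inps, InputOf, Set.mem_setOf_eq]
  constructor
  · rintro ⟨-, hox, -⟩
    rw [hwe]; exact hox
  · intro hx
    have hox : o < x := by rw [hwe] at hx; exact hx
    refine ⟨hsub hx, hox, ?_⟩
    rintro ⟨y, hyQ, hoy, hyx⟩
    have hyw : y ∈ w := by rw [hwe]; exact hoy
    exact hyx.not_ge ((hL y (hwL y hyw)) hyx.le)

lemma inps_root_eq {r : T} {v : Set T}
    (hv : v = Inps (fullTree L) r)
    (Q : PreTree T) (hsub : v ⊆ Q.edges) : Inps Q r = v := by
  ext x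
  simp only [Inps, InputOf, Set.mem_setOf_eq]
  constructor
  · rintro ⟨hxQ, hrx, hbl⟩
    obtain ⟨z, hzx, hz⟩ := exists_min_input (L := L) hrx
    have hzv : z ∈ v := by rw [hv]; exact hz
    rcases eq_or_lt_of_le hzx with h | h
    · exact h ▸ hzv
    · exact absurd ⟨z, hsub hzv, (input_full_iff.mp hz).1, h⟩ hbl
  · intro hx
    have hx' : InputOf (fullTree L) x r := by rw [hv] at hx; exact hx
    have h := input_full_iff.mp hx'
    exact ⟨hsub hx, h.1, by rintro ⟨y, -, hry, hyx⟩; exact h.2 y hry hyx⟩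

lemma vert_small (hL : ∀ l ∈ L, IsMax l) {r : T} (hrle : ∀ x, r ≤ x) {v : Set T}
    (hv : v = Inps (fullTree L) r)
    (hvL : ∀ x ∈ v, x ∈ L) (htwo : 2 ≤ nv (fullTree L)) : False := by
  have hsub : {e : T | e ∉ L} ⊆ {r} := by
    intro t ht
    by_contra hne'
    have htr : t ≠ r := by simpa using hne'
    have hrt : r < t := lt_of_le_of_ne (hrle t) (Ne.symm htr)
    obtain ⟨z, hzt, hz⟩ := exists_min_input hrt
    have hzv : z ∈ v := by rw [hv]; exact hz
    have h2 : t ≤ z := hL z (hvL z hzv) hzt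
    have : z = t := le_antisymm hzt h2
    exact ht (this ▸ hvL z hzv)
  have h1 : nv (fullTree L) ≤ 1 := by
    have := Set.ncard_le_ncard hsub (Set.finite_singleton r)
    simpa [nv, fullTree] using this
  omega

lemma inner_pers (hchain : ∀ e s t : T, s ≤ e → t ≤ e → s ≤ t ∨ t ≤ s)
    {e1 e2 o1 o2 : T} (hne : e1 ≠ e2)
    (he2L : e2 ∉ L) (ho1L : o1 ∉ L) (ho2L : o2 ∉ L)
    (h1 : InputOf (fullTree L) e1 o1) (h2 : InputOf (fullTree L) e2 o2)
    {Q : PreTree T} (hE : Q.edges = Set.univ \ {e1}) (hV : Q.vert = {e : T | e ∉ L} \ {e1}) :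
    InnerE Q e2 := by
  have h1' := input_full_iff.mp h1
  have h2' := input_full_iff.mp h2
  have he2Q : e2 ∈ Q.edges := by rw [hE]; exact ⟨trivial, hne.symm⟩
  refine ⟨by rw [hV]; exact ⟨he2L, hne.symm⟩, ?_⟩
  by_cases h : o2 = e1
  · have he12 : e1 < e2 := by rw [← h]; exact h2'.1
    have ho1e2 : o1 < e2 := h1'.1.trans he12
    refine ⟨o1, by rw [hV]; exact ⟨ho1L, h1'.1.ne⟩, he2Q, ho1e2, ?_⟩
    rintro ⟨y, hyQ, hoy, hye2⟩
    have hyne : y ≠ e1 := by rw [hE] at hyQ; exact hyQ.2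
    rcases hchain e2 y e1 hye2.le he12.le with hy | hy
    · exact h1'.2 y hoy (lt_of_le_of_ne hy hyne)
    · exact h2'.2 y (by rw [h]; exact lt_of_le_of_ne hy (Ne.symm hyne)) hye2
  · refine ⟨o2, by rw [hV]; exact ⟨ho2L, h⟩, he2Q, h2'.1, ?_⟩
    rintro ⟨y, -, hoy, hye2⟩
    exact h2'.2 y hoy hye2

lemma root_not_inner {r : T} (hrle : ∀ x : T, r ≤ x) (h : InnerE (fullTree L) r) : False := by
  obtain ⟨-, o, -, ho⟩ := h
  exact ((input_full_iff.mp ho).1.not_ge (hrle o)).elim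

lemma mixed_top {w : Set T} {o : T} {Pg : PreTree T}
    (hg : ElemF (.top w o) Pg (fullTree L)) (hi : InnerE (fullTree L) o) :
    MixedOrd (.top w o) (.inner o) (fullTree L) := by
  obtain ⟨ho, hw, hwL, -, -⟩ := hg
  refine ⟨o, o, rfl, hi, Or.inl (by rw [hw]), Or.inl rfl, ?_⟩
  rintro e' ⟨he'v, -⟩ (h | h)
  · exact h
  · exact absurd he'v (hwL e' (by rw [hw]; exact h))

lemma mixed_bot {v : Set T} {r e₀ : T} {Pg : PreTree T}
    (hg : ElemF (.bot v r e₀) Pg (fullTree L)) (hi : InnerE (fullTree L) e₀) :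
    MixedOrd (.bot v r e₀) (.inner e₀) (fullTree L) := by
  obtain ⟨hr, hrv, hv, he₀, hvL, -, -⟩ := hg
  have hrle : ∀ x : T, r ≤ x := fun x => hr.2 x trivial
  have hatt : InputOf (fullTree L) e₀ r := by
    have := he₀; rw [hv] at this; exact this
  refine ⟨e₀, r, rfl, hi, Or.inr ⟨e₀, by rw [hv], hr⟩, Or.inr hatt, ?_⟩
  rintro e' he' (h | h)
  · exact absurd he' (h ▸ fun hc => root_not_inner hrle hc)
  · have he'v : e' ∈ v := by rw [hv]; exact h
    by_contra hne
    exact (hvL e' he'v hne) he'.1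


lemma case_ii (hchain : ∀ e s t : T, s ≤ e → t ≤ e → s ≤ t ∨ t ≤ s)
    {e1 e2 : T} (hne : e1 ≠ e2) {Pf Pg : PreTree T}
    (hf : ElemF (.inner e1) Pf (fullTree L)) (hg : ElemF (.inner e2) Pg (fullTree L)) :
    ∃ P, ElemF (.inner e2) P Pf ∧ ElemF (.inner e1) P Pg := by
  obtain ⟨hi1, hE1, hV1⟩ := hf
  obtain ⟨hi2, hE2, hV2⟩ := hg
  obtain ⟨he1v, o1, ho1v, ho1⟩ := hi1
  obtain ⟨he2v, o2, ho2v, ho2⟩ := hi2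
  refine ⟨⟨Set.univ \ {e1, e2}, {e : T | e ∉ L} \ {e1, e2}⟩, ⟨?_, ?_, ?_⟩, ⟨?_, ?_, ?_⟩⟩
  · exact inner_pers hchain hne he2v ho1v ho2v ho1 ho2 hE1 hV1
  · rw [hE1]; ext x; simp only [fullTree, Set.mem_diff, Set.mem_univ, Set.mem_singleton_iff, Set.mem_insert_iff, Set.mem_union, Set.mem_setOf_eq, Set.mem_sep_iff, true_and]; try tauto
  · rw [hV1]; ext x; simp only [fullTree, Set.mem_diff, Set.mem_univ, Set.mem_singleton_iff, Set.mem_insert_iff, Set.mem_union, Set.mem_setOf_eq, Set.mem_sep_iff, true_and]; try tauto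
  · exact inner_pers hchain (Ne.symm hne) he1v ho2v ho1v ho2 ho1 hE2 hV2
  · rw [hE2]; ext x; simp only [fullTree, Set.mem_diff, Set.mem_univ, Set.mem_singleton_iff, Set.mem_insert_iff, Set.mem_union, Set.mem_setOf_eq, Set.mem_sep_iff, true_and]; try tauto
  · rw [hV2]; ext x; simp only [fullTree, Set.mem_diff, Set.mem_univ, Set.mem_singleton_iff, Set.mem_insert_iff, Set.mem_union, Set.mem_setOf_eq, Set.mem_sep_iff, true_and]; try tauto

lemma case_tt (hL : ∀ l ∈ L, IsMax l)
    (hchain : ∀ e s t : T, s ≤ e → t ≤ e → s ≤ t ∨ t ≤ s)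
    {w1 w2 : Set T} {o1 o2 : T} (hne : o1 ≠ o2) {Pf Pg : PreTree T}
    (hf : ElemF (.top w1 o1) Pf (fullTree L)) (hg : ElemF (.top w2 o2) Pg (fullTree L)) :
    ∃ P, ElemF (.top w2 o2) P Pf ∧ ElemF (.top w1 o1) P Pg := by
  obtain ⟨ho1, hw1, hw1L, hE1, hV1⟩ := hf
  obtain ⟨ho2, hw2, hw2L, hE2, hV2⟩ := hg
  have hw1L' : ∀ x ∈ w1, x ∈ L := fun x hx => not_not.mp (hw1L x hx)
  have hw2L' : ∀ x ∈ w2, x ∈ L := fun x hx => not_not.mp (hw2L x hx)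
  have hc1 : w1 = {y | o1 < y} := top_w_eq hL hw1 hw1L'
  have hc2 : w2 = {y | o2 < y} := top_w_eq hL hw2 hw2L'
  have h12 : ¬ o1 < o2 := fun h => ho2 (hw1L' o2 (by rw [hc1]; exact h))
  have h21 : ¬ o2 < o1 := fun h => ho1 (hw2L' o1 (by rw [hc2]; exact h))
  have hdisj : ∀ x, x ∈ w1 → x ∉ w2 := by
    intro x hx1 hx2
    rw [hc1] at hx1; rw [hc2] at hx2
    rcases hchain x o1 o2 hx1.le hx2.le with h | h
    · exact h12 (lt_of_le_of_ne h hne)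
    · exact h21 (lt_of_le_of_ne h (Ne.symm hne))
  refine ⟨⟨Set.univ \ (w1 ∪ w2), {e : T | e ∉ L} \ {o1, o2}⟩,
    ⟨?_, ?_, ?_, ?_, ?_⟩, ⟨?_, ?_, ?_, ?_, ?_⟩⟩
  · rw [hV1]; exact ⟨ho2, fun h => hne (Set.mem_singleton_iff.mp h).symm⟩
  · refine (inps_top_eq hL hc2 hw2L' Pf ?_).symm
    rw [hE1]; intro x hx; exact ⟨trivial, fun hx1 => hdisj x hx1 hx⟩
  · intro x hx; rw [hV1]; rintro ⟨h1, -⟩; exact h1 (hw2L' x hx)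
  · rw [hE1]; ext x; simp only [fullTree, Set.mem_diff, Set.mem_univ, Set.mem_singleton_iff, Set.mem_insert_iff, Set.mem_union, Set.mem_setOf_eq, Set.mem_sep_iff, true_and]; try tauto
  · rw [hV1]; ext x; simp only [fullTree, Set.mem_diff, Set.mem_univ, Set.mem_singleton_iff, Set.mem_insert_iff, Set.mem_union, Set.mem_setOf_eq, Set.mem_sep_iff, true_and]; try tauto
  · rw [hV2]; exact ⟨ho1, fun h => hne (Set.mem_singleton_iff.mp h)⟩
  · refine (inps_top_eq hL hc1 hw1L' Pg ?_).symm
    rw [hE2]; intro x hx; exact ⟨trivial, hdisj x hx⟩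
  · intro x hx; rw [hV2]; rintro ⟨h1, -⟩; exact h1 (hw1L' x hx)
  · rw [hE2]; ext x; simp only [fullTree, Set.mem_diff, Set.mem_univ, Set.mem_singleton_iff, Set.mem_insert_iff, Set.mem_union, Set.mem_setOf_eq, Set.mem_sep_iff, true_and]; try tauto
  · rw [hV2]; ext x; simp only [fullTree, Set.mem_diff, Set.mem_univ, Set.mem_singleton_iff, Set.mem_insert_iff, Set.mem_union, Set.mem_setOf_eq, Set.mem_sep_iff, true_and]; try tauto

lemma case_it (hL : ∀ l ∈ L, IsMax l)
    {e : T} {w : Set T} {o : T} (hne : e ≠ o) {Pf Pg : PreTree T}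
    (hf : ElemF (.inner e) Pf (fullTree L)) (hg : ElemF (.top w o) Pg (fullTree L)) :
    ∃ P, ElemF (.top w o) P Pf ∧ ElemF (.inner e) P Pg := by
  obtain ⟨hi, hE1, hV1⟩ := hf
  obtain ⟨ho, hw, hwL, hE2, hV2⟩ := hg
  obtain ⟨hev, oe, hoev, hoe⟩ := hi
  have heL : e ∉ L := hev
  have hwL' : ∀ x ∈ w, x ∈ L := fun x hx => not_not.mp (hwL x hx)
  have hc : w = {y | o < y} := top_w_eq hL hw hwL'
  have hew : e ∉ w := fun h => heL (hwL' e h)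
  have hoe' := input_full_iff.mp hoe
  have hoene : oe ≠ o := by
    intro h
    apply heL
    apply hwL' e
    rw [hw]
    show InputOf _ e o
    rw [← h]; exact hoe
  refine ⟨⟨(Set.univ \ {e}) \ w, ({x : T | x ∉ L} \ {e}) \ {o}⟩,
    ⟨?_, ?_, ?_, ?_, ?_⟩, ⟨?_, ?_, ?_⟩⟩
  · rw [hV1]; exact ⟨ho, fun h => hne (Set.mem_singleton_iff.mp h).symm⟩
  · refine (inps_top_eq hL hc hwL' Pf ?_).symm
    rw [hE1]; intro x hx
    exact ⟨trivial, fun hxe => hew ((Set.mem_singleton_iff.mp hxe) ▸ hx)⟩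
  · intro x hx; rw [hV1]; rintro ⟨h1, -⟩; exact h1 (hwL' x hx)
  · rw [hE1]; ext x; simp only [fullTree, Set.mem_diff, Set.mem_univ, Set.mem_singleton_iff, Set.mem_insert_iff, Set.mem_union, Set.mem_setOf_eq, Set.mem_sep_iff, true_and]; try tauto
  · rw [hV1]; ext x; simp only [fullTree, Set.mem_diff, Set.mem_univ, Set.mem_singleton_iff, Set.mem_insert_iff, Set.mem_union, Set.mem_setOf_eq, Set.mem_sep_iff, true_and]; try tauto
  · refine ⟨by rw [hV2]; exact ⟨heL, fun h => hne (Set.mem_singleton_iff.mp h)⟩,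
      oe, by rw [hV2]; exact ⟨hoev, fun h => hoene (Set.mem_singleton_iff.mp h)⟩, ?_⟩
    refine ⟨by rw [hE2]; exact ⟨trivial, hew⟩, hoe'.1, ?_⟩
    rintro ⟨y, -, h1, h2⟩; exact hoe'.2 y h1 h2
  · rw [hE2]; ext x; simp only [fullTree, Set.mem_diff, Set.mem_univ, Set.mem_singleton_iff, Set.mem_insert_iff, Set.mem_union, Set.mem_setOf_eq, Set.mem_sep_iff, true_and]; try tauto
  · rw [hV2]; ext x; simp only [fullTree, Set.mem_diff, Set.mem_univ, Set.mem_singleton_iff, Set.mem_insert_iff, Set.mem_union, Set.mem_setOf_eq, Set.mem_sep_iff, true_and]; try tauto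

lemma case_ib (hL : ∀ l ∈ L, IsMax l)
    (hchain : ∀ e s t : T, s ≤ e → t ≤ e → s ≤ t ∨ t ≤ s)
    {e : T} {v : Set T} {r e₀ : T} (hne : e ≠ e₀) {Pf Pg : PreTree T}
    (hf : ElemF (.inner e) Pf (fullTree L)) (hg : ElemF (.bot v r e₀) Pg (fullTree L)) :
    ∃ P, ElemF (.bot v r e₀) P Pf ∧ ElemF (.inner e) P Pg := by
  obtain ⟨hi, hE1, hV1⟩ := hf
  obtain ⟨hr, hrv, hv, he₀, hvL, hE2, hV2⟩ := hg
  obtain ⟨hev, oe, hoev, hoe⟩ := hi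
  have heL : e ∉ L := hev
  have hrle : ∀ x : T, r ≤ x := fun x => hr.2 x trivial
  have hvL' : ∀ x ∈ v, x ≠ e₀ → x ∈ L := fun x hx h => not_not.mp (hvL x hx h)
  have hoe' := input_full_iff.mp hoe
  have her : e ≠ r := fun h => root_not_inner hrle (h ▸ (⟨hev, oe, hoev, hoe⟩ : InnerE (fullTree L) e))
  have hrlt : r < e := lt_of_le_of_ne (hrle e) (Ne.symm her)
  have henv : e ∉ v := fun h => heL (hvL' e h hne)
  have he₀e : e₀ < e := by
    obtain ⟨z, hze, hz⟩ := exists_min_input hrlt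
    have hzv : z ∈ v := by rw [hv]; exact hz
    have hzne : z ≠ e := fun h => henv (h ▸ hzv)
    by_cases h : z = e₀
    · exact h ▸ lt_of_le_of_ne hze hzne
    · exact absurd (le_antisymm hze (hL z (hvL' z hzv h) hze)) hzne
  have hoer : oe ≠ r := fun hh => henv (by rw [hv]; rw [hh] at hoe; exact hoe)
  have he₀oe : e₀ ≤ oe := by
    rcases hchain e oe e₀ hoe'.1.le he₀e.le with h | h
    · rcases eq_or_lt_of_le h with h' | h'
      · exact h'.ge
      · have he₀in := input_full_iff.mp
          (show InputOf (fullTree L) e₀ r by rw [hv] at he₀; exact he₀)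
        have hroe : r < oe := lt_of_le_of_ne (hrle oe) (Ne.symm hoer)
        exact absurd h' (he₀in.2 oe hroe)
    · exact h
  refine ⟨⟨{x : T | e₀ ≤ x} \ {e}, ({x : T | x ∉ L} \ {r}) \ {e}⟩,
    ⟨?_, ?_, ?_, ?_, ?_, ?_, ?_⟩, ⟨?_, ?_, ?_⟩⟩
  · constructor
    · rw [hE1]; exact ⟨trivial, fun h => her (Set.mem_singleton_iff.mp h).symm⟩
    · intro x hx; exact hrle x
  · rw [hV1]; exact ⟨hrv, fun h => her (Set.mem_singleton_iff.mp h).symm⟩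
  · refine (inps_root_eq hv Pf ?_).symm
    rw [hE1]; intro x hx
    exact ⟨trivial, fun hxe => henv ((Set.mem_singleton_iff.mp hxe) ▸ hx)⟩
  · exact he₀
  · intro x hx hxe; rw [hV1]; rintro ⟨h1, -⟩; exact h1 (hvL' x hx hxe)
  · rw [hE1]; ext x; simp only [fullTree, Set.mem_diff, Set.mem_univ, Set.mem_singleton_iff, Set.mem_insert_iff, Set.mem_union, Set.mem_setOf_eq, Set.mem_sep_iff, true_and]; try tauto
  · rw [hV1]; ext x; simp only [fullTree, Set.mem_diff, Set.mem_univ, Set.mem_singleton_iff, Set.mem_insert_iff, Set.mem_union, Set.mem_setOf_eq, Set.mem_sep_iff, true_and]; try tauto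
  · refine ⟨by rw [hV2]; exact ⟨heL, fun h => her (Set.mem_singleton_iff.mp h)⟩,
      oe, by rw [hV2]; exact ⟨hoev, fun h => hoer (Set.mem_singleton_iff.mp h)⟩, ?_⟩
    refine ⟨by rw [hE2]; exact ⟨trivial, he₀e.le⟩, hoe'.1, ?_⟩
    rintro ⟨y, -, h1, h2⟩; exact hoe'.2 y h1 h2
  · rw [hE2]; ext x; simp only [fullTree, Set.mem_diff, Set.mem_univ, Set.mem_singleton_iff, Set.mem_insert_iff, Set.mem_union, Set.mem_setOf_eq, Set.mem_sep_iff, true_and]; try tauto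
  · rw [hV2]; ext x; simp only [fullTree, Set.mem_diff, Set.mem_univ, Set.mem_singleton_iff, Set.mem_insert_iff, Set.mem_union, Set.mem_setOf_eq, Set.mem_sep_iff, true_and]; try tauto

lemma case_tb (hL : ∀ l ∈ L, IsMax l) (htwo : 2 ≤ nv (fullTree L))
    {w : Set T} {o : T} {v : Set T} {r e₀ : T} {Pf Pg : PreTree T}
    (hf : ElemF (.top w o) Pf (fullTree L)) (hg : ElemF (.bot v r e₀) Pg (fullTree L)) :
    ∃ P, ElemF (.bot v r e₀) P Pf ∧ ElemF (.top w o) P Pg := by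
  obtain ⟨ho, hw, hwL, hE1, hV1⟩ := hf
  obtain ⟨hr, hrv, hv, he₀, hvL, hE2, hV2⟩ := hg
  have hrle : ∀ x : T, r ≤ x := fun x => hr.2 x trivial
  have hwL' : ∀ x ∈ w, x ∈ L := fun x hx => not_not.mp (hwL x hx)
  have hvL' : ∀ x ∈ v, x ≠ e₀ → x ∈ L := fun x hx h => not_not.mp (hvL x hx h)
  have hc : w = {y | o < y} := top_w_eq hL hw hwL'
  have hor : o ≠ r := by
    intro h
    refine vert_small hL hrle hv (fun x hx => ?_) htwo
    apply hwL' x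
    rw [hw, h, ← hv]; exact hx
  have hro : r < o := lt_of_le_of_ne (hrle o) (Ne.symm hor)
  have he₀o : e₀ ≤ o := by
    obtain ⟨z, hzo, hz⟩ := exists_min_input hro
    have hzv : z ∈ v := by rw [hv]; exact hz
    by_cases h : z = e₀
    · exact h ▸ hzo
    · have hzL := hvL' z hzv h
      have hzoeq : z = o := le_antisymm hzo (hL z hzL hzo)
      exact absurd (hzoeq ▸ hzL) ho
  have hdisj : ∀ x ∈ v, x ∉ w := by
    intro x hxv hxw
    have hx' := input_full_iff.mp
      (show InputOf (fullTree L) x r by rw [hv] at hxv; exact hxv)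
    exact hx'.2 o hro (by rw [hc] at hxw; exact hxw)
  have hrw : r ∉ w := fun h => lt_asymm hro (by rw [hc] at h; exact h)
  refine ⟨⟨{x : T | e₀ ≤ x} \ w, ({x : T | x ∉ L} \ {o}) \ {r}⟩,
    ⟨?_, ?_, ?_, ?_, ?_, ?_, ?_⟩, ⟨?_, ?_, ?_, ?_, ?_⟩⟩
  · constructor
    · rw [hE1]; exact ⟨trivial, hrw⟩
    · intro x hx; exact hrle x
  · rw [hV1]; exact ⟨hrv, fun h => hor (Set.mem_singleton_iff.mp h).symm⟩
  · refine (inps_root_eq hv Pf ?_).symm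
    rw [hE1]; intro x hx; exact ⟨trivial, hdisj x hx⟩
  · exact he₀
  · intro x hx hxe; rw [hV1]; rintro ⟨h1, -⟩; exact h1 (hvL' x hx hxe)
  · rw [hE1]; ext x; simp only [fullTree, Set.mem_diff, Set.mem_univ, Set.mem_singleton_iff, Set.mem_insert_iff, Set.mem_union, Set.mem_setOf_eq, Set.mem_sep_iff, true_and]; try tauto
  · rw [hV1]; ext x; simp only [fullTree, Set.mem_diff, Set.mem_univ, Set.mem_singleton_iff, Set.mem_insert_iff, Set.mem_union, Set.mem_setOf_eq, Set.mem_sep_iff, true_and]; try tauto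
  · rw [hV2]; exact ⟨ho, fun h => hor (Set.mem_singleton_iff.mp h)⟩
  · refine (inps_top_eq hL hc hwL' Pg ?_).symm
    rw [hE2]; intro x hx
    exact ⟨trivial, he₀o.trans (by rw [hc] at hx; exact hx.le)⟩
  · intro x hx; rw [hV2]; rintro ⟨h1, -⟩; exact h1 (hwL' x hx)
  · rw [hE2]; ext x; simp only [fullTree, Set.mem_diff, Set.mem_univ, Set.mem_singleton_iff, Set.mem_insert_iff, Set.mem_union, Set.mem_setOf_eq, Set.mem_sep_iff, true_and]; try tauto
  · rw [hV2]; ext x; simp only [fullTree, Set.mem_diff, Set.mem_univ, Set.mem_singleton_iff, Set.mem_insert_iff, Set.mem_union, Set.mem_setOf_eq, Set.mem_sep_iff, true_and]; try tauto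

lemma case_bb (hL : ∀ l ∈ L, IsMax l) (htwo : 2 ≤ nv (fullTree L))
    {v1 : Set T} {r1 e1 : T} {v2 : Set T} {r2 e2 : T}
    (hne : (FLbl.bot v1 r1 e1 : FLbl T) ≠ .bot v2 r2 e2) {Pf Pg : PreTree T}
    (hf : ElemF (.bot v1 r1 e1) Pf (fullTree L)) (hg : ElemF (.bot v2 r2 e2) Pg (fullTree L)) :
    False := by
  obtain ⟨hr1, hrv1, hv1, he1, hvL1, -, -⟩ := hf
  obtain ⟨hr2, hrv2, hv2, he2, hvL2, -, -⟩ := hg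
  have hr12 : r1 = r2 := le_antisymm (hr1.2 r2 trivial) (hr2.2 r1 trivial)
  have hv12 : v1 = v2 := by rw [hv1, hv2, hr12]
  have he12 : e1 ≠ e2 := fun h => hne (by rw [hv12, hr12, h])
  refine vert_small hL (fun x => hr1.2 x trivial) hv1 (fun x hx => ?_) htwo
  by_cases h : x = e1
  · have hxe2 : x ≠ e2 := by rw [h]; exact he12
    exact not_not.mp (hvL2 x (by rw [← hv12]; exact hx) hxe2)
  · exact not_not.mp (hvL1 x hx h)

end Helpers

/-- For a tree with at least two vertices and a non-mixed pair of distinct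
elementary face maps `∂_f : P_f → T`, `∂_g : P_g → T`, the faces `∂_f ∂_g T` and
`∂_g ∂_f T` exist and coincide: `∂_f ∂_g = ∂_g ∂_f`. -/
theorem stmt11 {T : Type} [Fintype T] [PartialOrder T]
    (rT : T) (hroot : ∀ t, rT ≤ t)
    (hchain : ∀ e s t : T, s ≤ e → t ≤ e → s ≤ t ∨ t ≤ s)
    (L : Set T) (hL : ∀ l ∈ L, IsMax l)
    (htwo : 2 ≤ nv (fullTree L))
    (f g : FLbl T) (Pf Pg : PreTree T)
    (hf : ElemF f Pf (fullTree L)) (hg : ElemF g Pg (fullTree L))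
    (hne : f ≠ g) (hmix : ¬ MixedPair f g (fullTree L)) :
    ∃ P : PreTree T, ElemF g P Pf ∧ ElemF f P Pg := by
  rcases f with e1 | ⟨w1, o1⟩ | ⟨v1, r1, e1⟩ <;> rcases g with e2 | ⟨w2, o2⟩ | ⟨v2, r2, e2⟩
  · exact case_ii hchain (fun h => hne (by rw [h])) hf hg
  · have hne' : e1 ≠ o2 := by
      intro h
      exact hmix (Or.inr (by rw [h]; exact mixed_top hg (h ▸ hf.1)))
    exact case_it hL hne' hf hg
  · have hne' : e1 ≠ e2 := by
      intro h
      exact hmix (Or.inr (by rw [h]; exact mixed_bot hg (h ▸ hf.1)))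
    exact case_ib hL hchain hne' hf hg
  · have hne' : e2 ≠ o1 := by
      intro h
      exact hmix (Or.inl (by rw [h]; exact mixed_top hf (h ▸ hg.1)))
    obtain ⟨P, h1, h2⟩ := case_it hL hne' hg hf
    exact ⟨P, h2, h1⟩
  · have hoo : o1 ≠ o2 := by
      intro h
      apply hne
      have hww : w1 = w2 := by rw [hf.2.1, hg.2.1, h]
      rw [hww, h]
    exact case_tt hL hchain hoo hf hg
  · exact case_tb hL htwo hf hg
  · have hne' : e2 ≠ e1 := by
      intro h
      exact hmix (Or.inl (by rw [h]; exact mixed_bot hf (h ▸ hg.1)))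
    obtain ⟨P, h1, h2⟩ := case_ib hL hchain hne' hg hf
    exact ⟨P, h2, h1⟩
  · obtain ⟨P, h1, h2⟩ := case_tb hL htwo hg hf
    exact ⟨P, h2, h1⟩
  · exact (case_bb hL htwo hne hf hg).elim
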